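/- Let D⁺ denote the ℤ-submodule of ℚ[X] spanned by {X^n / n! : n ≥ 1}, regarded as a non-unital commutative ring with the multiplication inherited from ℚ[X]. For any non-unital commutative ring A, the assignment φ ↦ (φ(X^n / n!))_{n ≥ 1} is a bijection from the set of non-unital ring homomorphisms D⁺ → A onto the set of divided power sequences in A. -/

import Mathlib

open Polynomial

/-- The divided power `X ^ n / n!` in `ℚ[X]`. -/
noncomputable def divPow (n : ℕ) : Polynomial ℚ := ((n.factorial : ℚ))⁻¹ • X ^ n

/-- `D⁺`: the `ℤ`-span of the divided powers `X ^ n / n!` with `n ≥ 1`. -/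
noncomputable def DplusSpan : Submodule ℤ (Polynomial ℚ) :=
  Submodule.span ℤ (divPow '' {n : ℕ | 1 ≤ n})

lemma divPow_mul (m n : ℕ) : divPow m * divPow n = ((m + n).choose m) • divPow (m + n) := by
  unfold divPow
  rw [smul_mul_smul_comm, ← pow_add, ← Nat.cast_smul_eq_nsmul ℚ, smul_smul]
  congr 1
  have h := Nat.add_choose_mul_factorial_mul_factorial n m
  have h2 : ((n + m).choose m : ℚ) * n.factorial * m.factorial = (n + m).factorial := by
    exact_mod_cast congrArg (Nat.cast : ℕ → ℚ) h
  rw [add_comm m n]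
  field_simp
  nlinarith [h2]

lemma linearIndependent_divPow : LinearIndependent ℤ (fun n : {n : ℕ // 1 ≤ n} => divPow n) := by
  have hQ : LinearIndependent ℚ (fun n : ℕ => divPow n) := by
    have h1 : LinearIndependent ℚ (fun n : ℕ => (X : Polynomial ℚ) ^ n) := by
      have := (Polynomial.basisMonomials ℚ).linearIndependent
      rw [Polynomial.coe_basisMonomials] at this
      convert this using 2 with n
      rw [X_pow_eq_monomial]
    have := h1.units_smul (fun n => Units.mk0 ((n.factorial : ℚ)⁻¹) (by positivity))
    convert this using 2 with n
    simp [divPow, Units.smul_def]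
  have hQ' : LinearIndependent ℚ (fun n : {n : ℕ // 1 ≤ n} => divPow n) :=
    hQ.comp Subtype.val Subtype.val_injective
  exact hQ'.restrict_scalars (by intro a b h; simpa using h)


abbrev Idx := {n : ℕ // 1 ≤ n}
noncomputable def dpv : Idx → Polynomial ℚ := fun n => divPow n

lemma range_dpv : Set.range dpv = divPow '' {n : ℕ | 1 ≤ n} := by
  rw [Set.image_eq_range]; rfl

lemma Dplus_eq : DplusSpan = Submodule.span ℤ (Set.range dpv) := by
  rw [DplusSpan, range_dpv]

lemma dpv_mem (n : Idx) : dpv n ∈ Submodule.span ℤ (Set.range dpv) :=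
  Submodule.subset_span ⟨n, rfl⟩

def iadd (m n : Idx) : Idx := ⟨(m : ℕ) + (n : ℕ), le_trans m.2 (Nat.le_add_right _ _)⟩

lemma dpv_mul (m n : Idx) :
    dpv m * dpv n = (((m : ℕ) + (n : ℕ)).choose m) • dpv (iadd m n) := divPow_mul m n

lemma span_mul_mem {a b : Polynomial ℚ} (ha : a ∈ Submodule.span ℤ (Set.range dpv))
    (hb : b ∈ Submodule.span ℤ (Set.range dpv)) : a * b ∈ Submodule.span ℤ (Set.range dpv) := by
  induction ha using Submodule.span_induction with
  | mem x hx =>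
    obtain ⟨i, rfl⟩ := hx
    induction hb using Submodule.span_induction with
    | mem y hy =>
      obtain ⟨j, rfl⟩ := hy
      rw [dpv_mul]
      exact nsmul_mem (dpv_mem _) _
    | zero => simpa using Submodule.zero_mem _
    | add y z _ _ hy hz => rw [mul_add]; exact Submodule.add_mem _ hy hz
    | smul c y _ hy => rw [mul_smul_comm]; exact Submodule.smul_mem _ _ hy
  | zero => simpa using Submodule.zero_mem _
  | add x y _ _ hx hy => rw [add_mul]; exact Submodule.add_mem _ hx hy
  | smul c x _ hx => rw [smul_mul_assoc]; exact Submodule.smul_mem _ _ hx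

noncomputable def Tsub : NonUnitalSubring (Polynomial ℚ) where
  carrier := Submodule.span ℤ (Set.range dpv)
  add_mem' := Submodule.add_mem _
  zero_mem' := Submodule.zero_mem _
  neg_mem' := Submodule.neg_mem _
  mul_mem' := span_mul_mem

noncomputable def eqvT : ↥(Submodule.span ℤ (Set.range dpv)) ≃+ Tsub where
  toFun x := ⟨x.1, x.2⟩
  invFun x := ⟨x.1, x.2⟩
  left_inv _ := rfl
  right_inv _ := rfl
  map_add' _ _ := rfl

noncomputable def bT : Module.Basis Idx ℤ Tsub :=
  (Module.Basis.span linearIndependent_divPow).map eqvT.toIntLinearEquiv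

lemma bT_coe (i : Idx) : (bT i : Polynomial ℚ) = dpv i := by
  simp only [bT, Module.Basis.map_apply]
  show ((eqvT ((Module.Basis.span linearIndependent_divPow) i)) : Polynomial ℚ) = dpv i
  have := Module.Basis.span_apply linearIndependent_divPow i
  exact congrArg Subtype.val this

lemma bT_mul (i j : Idx) :
    bT i * bT j = (((i : ℕ) + (j : ℕ)).choose i) • bT (iadd i j) := by
  apply Subtype.ext
  show (bT i : Polynomial ℚ) * (bT j : Polynomial ℚ) =
    ((((i : ℕ) + (j : ℕ)).choose i) • (bT (iadd i j)) : Tsub)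
  rw [bT_coe, bT_coe, dpv_mul, ← bT_coe (iadd i j)]
  simp

section Equiv
variable (A : Type) [NonUnitalCommRing A]

/-- The type of divided power sequences. -/
def DPSeq : Type :=
  {x : Idx → A // ∀ m n : Idx,
    x m * x n = (((m : ℕ) + (n : ℕ)).choose m) • x (iadd m n)}

noncomputable def fwd (φ : Tsub →ₙ+* A) : DPSeq A :=
  ⟨fun n => φ (bT n), by
    intro m n
    rw [← map_mul, bT_mul]
    exact map_nsmul φ.toAddMonoidHom _ _⟩

noncomputable def bwdL (x : DPSeq A) : Tsub →ₗ[ℤ] A := bT.constr ℤ x.1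

lemma bwdL_mul (x : DPSeq A) (a b : Tsub) :
    bwdL A x (a * b) = bwdL A x a * bwdL A x b := by
  have key : (LinearMap.mul ℤ Tsub).compr₂ (bwdL A x) =
      (LinearMap.mul ℤ A).compl₁₂ (bwdL A x) (bwdL A x) := by
    apply bT.ext; intro i
    apply bT.ext; intro j
    simp only [LinearMap.compr₂_apply, LinearMap.compl₁₂_apply, LinearMap.mul_apply']
    rw [bT_mul, map_nsmul, bwdL, Module.Basis.constr_basis, Module.Basis.constr_basis, Module.Basis.constr_basis]
    exact (x.2 i j).symm
  have := DFunLike.congr_fun (DFunLike.congr_fun key a) b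
  simpa using this

noncomputable def bwd (x : DPSeq A) : Tsub →ₙ+* A where
  toFun := bwdL A x
  map_zero' := map_zero _
  map_add' := map_add _
  map_mul' := bwdL_mul A x

lemma left_inv' (φ : Tsub →ₙ+* A) : bwd A (fwd A φ) = φ := by
  have : bwdL A (fwd A φ) = φ.toAddMonoidHom.toIntLinearMap := by
    apply bT.ext; intro i
    rw [bwdL, Module.Basis.constr_basis]
    rfl
  apply NonUnitalRingHom.ext; intro a
  show bwdL A (fwd A φ) a = φ a
  rw [this]; rfl

lemma right_inv' (x : DPSeq A) : fwd A (bwd A x) = x := by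
  apply Subtype.ext; funext n
  show bwdL A x (bT n) = x.1 n
  rw [bwdL, Module.Basis.constr_basis]

end Equiv


/-- Maps out of the free non-unital divided power ring `ℤ⟨x⟩⁺` into any non-unital
commutative ring `A` are in bijection with divided power sequences in `A`,
via `φ ↦ (φ (X^n/n!))_{n ≥ 1}`. -/
theorem nonUnitalHom_equiv_dpSequence :
    ∃ T : NonUnitalSubring (Polynomial ℚ),
      (T : Set (Polynomial ℚ)) = (DplusSpan : Set (Polynomial ℚ)) ∧
      ∀ (A : Type) [NonUnitalCommRing A],
        ∃ e : (T →ₙ+* A) ≃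
            {x : {n : ℕ // 1 ≤ n} → A //
              ∀ m n : {n : ℕ // 1 ≤ n},
                x m * x n = (((m : ℕ) + (n : ℕ)).choose m) •
                  x ⟨(m : ℕ) + (n : ℕ), le_trans m.2 (Nat.le_add_right _ _)⟩},
          ∀ (φ : T →ₙ+* A) (n : {n : ℕ // 1 ≤ n}) (f : T),
            (f : Polynomial ℚ) = divPow n → (e φ).1 n = φ f := by
  refine ⟨Tsub, ?_, ?_⟩
  · show (↑(Submodule.span ℤ (Set.range dpv)) : Set (Polynomial ℚ)) = _
    rw [Dplus_eq]
  · intro A _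
    refine ⟨⟨fwd A, bwd A, left_inv' A, right_inv' A⟩, ?_⟩
    intro φ n f hf
    have hfb : f = bT n := by
      apply Subtype.ext
      rw [hf, bT_coe]; rfl
    show (fwd A φ).1 n = φ f
    rw [hfb]; rfl
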